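/- arXiv:2212.02446 — 3 statements merged into one kernel-verified Lean document; each statement's English description precedes it below -/
import Mathlib

section
/- Let a, x₁, x₂, y₁, y₂, b ∈ ℂ². Then the 4×4 complex matrix whose rows are the tensor products a⊗x₁, a⊗x₂, y₁⊗b, y₂⊗b (viewed as vectors in ℂ⁴) has determinant zero. -/
/-- The Kronecker product of two vectors in `ℂ²`, as a vector in `ℂ⁴`. -/
def kron2 (u v : Fin 2 → ℂ) : Fin 4 → ℂ :=
  ![u 0 * v 0, u 0 * v 1, u 1 * v 0, u 1 * v 1]

/-- A 4×4 matrix whose first two rows share the left Kronecker factor `a` and whose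
last two rows share the right Kronecker factor `b` is singular. -/
theorem stmt_2 (a x₁ x₂ y₁ y₂ b : Fin 2 → ℂ) :
    Matrix.det (Matrix.of ![kron2 a x₁, kron2 a x₂, kron2 y₁ b, kron2 y₂ b]) = 0 := by
  simp [Matrix.det_succ_row_zero, Fin.sum_univ_succ, kron2, Fin.succAbove]
  ring
end

section
/- Let {|φᵢ⟩ = |aᵢ,₁⟩⊗⋯⊗|aᵢ,ₙ⟩ : i = 1, …, m} be any set of m product vectors in ℂ^{d₁} ⊗ ⋯ ⊗ ℂ^{dₙ}. If m ≤ (d₁ − 1) + (d₂ − 1) + ⋯ + (dₙ − 1), then there exists a nonzero product vector |x₁⟩⊗⋯⊗|xₙ⟩ orthogonal to all |φᵢ⟩. Consequently, every unextendible product basis in ℂ^{d₁} ⊗ ⋯ ⊗ ℂ^{dₙ} has size at least Σᵢ(dᵢ − 1) + 1. -/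
open scoped ComplexInnerProductSpace

variable {n : ℕ} {d : Fin n → ℕ}

/-- The product vector `f₁ ⊗ ⋯ ⊗ fₙ`, realized concretely in `⊗ⱼ ℂ^{dⱼ}`. -/
noncomputable def fineVec (d : Fin n → ℕ) (f : ∀ j : Fin n, Fin (d j) → ℂ) :
    EuclideanSpace ℂ (∀ j : Fin n, Fin (d j)) :=
  WithLp.toLp 2 (fun x => ∏ j : Fin n, f j (x j))

/-- An unextendible product basis in `ℂ^{d₁} ⊗ ⋯ ⊗ ℂ^{dₙ}`: a set of orthonormal product
vectors such that no nonzero product vector is orthogonal to all of them. -/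
def IsUPB (d : Fin n → ℕ) {m : ℕ} (a : Fin m → ∀ j : Fin n, Fin (d j) → ℂ) : Prop :=
  Orthonormal ℂ (fun i => fineVec d (a i)) ∧
    ¬ ∃ f : ∀ j : Fin n, Fin (d j) → ℂ,
        fineVec d f ≠ 0 ∧ ∀ i, ⟪fineVec d (a i), fineVec d f⟫ = 0

lemma exists_ortho_aux (N : ℕ) (s : Finset (EuclideanSpace ℂ (Fin N))) (hs : s.card < N) :
    ∃ x : EuclideanSpace ℂ (Fin N), x ≠ 0 ∧ ∀ v ∈ s, ⟪v, x⟫ = 0 := by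
  set K := Submodule.span ℂ (s : Set (EuclideanSpace ℂ (Fin N)))
  have hK : Module.finrank ℂ K ≤ s.card := finrank_span_finset_le_card s
  have hne : Kᗮ ≠ ⊥ := by
    intro h
    have : K = ⊤ := Submodule.orthogonal_eq_bot_iff.mp h
    rw [this] at hK
    simp [finrank_euclideanSpace] at hK
    omega
  obtain ⟨x, hxK, hx0⟩ := Submodule.exists_mem_ne_zero_of_ne_bot hne
  exact ⟨x, hx0, fun v hv => (Submodule.mem_orthogonal K x).mp hxK v (Submodule.subset_span hv)⟩

/-- If `m ≤ Σⱼ (dⱼ − 1)` then any `m` product vectors admit a nonzero product vector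
orthogonal to all of them; consequently every UPB has size at least `Σⱼ (dⱼ − 1) + 1`. -/
theorem stmt_9 (n : ℕ) (d : Fin n → ℕ) (hd : ∀ j, 1 ≤ d j) :
    (∀ (m : ℕ) (a : Fin m → ∀ j : Fin n, Fin (d j) → ℂ),
      m ≤ ∑ j : Fin n, (d j - 1) →
      ∃ f : ∀ j : Fin n, Fin (d j) → ℂ,
        fineVec d f ≠ 0 ∧ ∀ i : Fin m, ⟪fineVec d (a i), fineVec d f⟫ = 0) ∧
    (∀ (m : ℕ) (a : Fin m → ∀ j : Fin n, Fin (d j) → ℂ),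
      IsUPB d a → (∑ j : Fin n, (d j - 1)) + 1 ≤ m) := by
  have main : ∀ (m : ℕ) (a : Fin m → ∀ j : Fin n, Fin (d j) → ℂ),
      m ≤ ∑ j : Fin n, (d j - 1) →
      ∃ f : ∀ j : Fin n, Fin (d j) → ℂ,
        fineVec d f ≠ 0 ∧ ∀ i : Fin m, ⟪fineVec d (a i), fineVec d f⟫ = 0 := by
    intro m a hm
    classical
    -- partition indices into blocks via an injection into Σ j, Fin (d j - 1)
    have hcard : Fintype.card (Fin (∑ j : Fin n, (d j - 1)))
        = Fintype.card (Σ j : Fin n, Fin (d j - 1)) := by simp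
    let e : Fin (∑ j : Fin n, (d j - 1)) ≃ (Σ j : Fin n, Fin (d j - 1)) :=
      Fintype.equivOfCardEq hcard
    let emb : Fin m → Σ j : Fin n, Fin (d j - 1) := fun i => e (Fin.castLE hm i)
    have hemb : Function.Injective emb :=
      e.injective.comp (Fin.castLE_injective hm)
    let block : Fin m → Fin n := fun i => (emb i).1
    -- each block has at most d j - 1 elements
    have hblock : ∀ j : Fin n,
        (Finset.univ.filter (fun i => block i = j)).card ≤ d j - 1 := by
      intro j
      have : (Finset.univ.filter (fun i => block i = j)).card
          ≤ (Finset.range (d j - 1)).card := by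
        apply Finset.card_le_card_of_injOn (fun i => ((emb i).2 : ℕ))
        · intro i hi
          rw [Finset.mem_coe, Finset.mem_filter] at hi
          have h1 : (emb i).1 = j := hi.2
          rw [Finset.mem_coe, Finset.mem_range]
          show ((emb i).2 : ℕ) < d j - 1
          have h2 : d (emb i).1 = d j := by rw [h1]
          have := (emb i).2.isLt
          omega
        · intro i hi i' hi' hval
          rw [Finset.mem_coe, Finset.mem_filter] at hi hi'
          apply hemb
          have h1 : (emb i).1 = (emb i').1 := hi.2.trans hi'.2.symm
          exact Sigma.ext h1 ((Fin.heq_ext_iff (by rw [h1])).mpr hval)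
      simpa using this
    -- for each j choose a nonzero vector orthogonal to the block-j components
    let s : ∀ j : Fin n, Finset (EuclideanSpace ℂ (Fin (d j))) := fun j =>
      (Finset.univ.filter (fun i => block i = j)).image (fun i => WithLp.toLp 2 (a i j))
    have hx : ∀ j : Fin n, ∃ x : EuclideanSpace ℂ (Fin (d j)), x ≠ 0 ∧
        ∀ v ∈ s j, ⟪v, x⟫ = 0 := by
      intro j
      apply exists_ortho_aux
      calc (s j).card ≤ (Finset.univ.filter (fun i => block i = j)).card :=
            Finset.card_image_le
        _ ≤ d j - 1 := hblock j
        _ < d j := by have := hd j; omega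
    choose x hx0 hxo using hx
    refine ⟨fun j => x j, ?_, ?_⟩
    · -- nonzero
      intro h
      have hk : ∀ j, ∃ k, x j k ≠ 0 := by
        intro j
        by_contra hc
        push_neg at hc
        exact hx0 j (by ext kk; simpa using hc kk)
      choose k hk using hk
      have := congrFun (congrArg WithLp.ofLp h) (fun j => k j)
      simp only [fineVec, WithLp.ofLp_toLp, WithLp.ofLp_zero, Pi.zero_apply] at this
      exact Finset.prod_ne_zero_iff.mpr (fun j _ => hk j) this
    · intro i
      -- factor the inner product
      have hfac : ⟪fineVec d (a i), fineVec d (fun j => x j)⟫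
          = ∏ j : Fin n, ∑ kk : Fin (d j), (starRingEnd ℂ) (a i j kk) * x j kk := by
        rw [Fintype.prod_sum]
        rw [PiLp.inner_apply]
        congr 1
        funext y
        simp only [fineVec, WithLp.ofLp_toLp, RCLike.inner_apply, map_prod]
        rw [Finset.prod_mul_distrib, mul_comm]
      rw [hfac]
      apply Finset.prod_eq_zero (Finset.mem_univ (block i))
      have hmem : (show EuclideanSpace ℂ (Fin (d (block i))) from WithLp.toLp 2 (a i (block i)))
          ∈ s (block i) := by
        simp only [s]
        exact Finset.mem_image_of_mem _ (by simp)
      have := hxo (block i) _ hmem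
      rw [PiLp.inner_apply] at this
      simpa [mul_comm] using this
  refine ⟨main, ?_⟩
  intro m a hUPB
  by_contra hc
  push_neg at hc
  exact hUPB.2 (main m a (by omega))
end

section
/- Let {|φᵢ⟩ : i = 1, …, m} be an unextendible product basis in H = H₁⊗⋯⊗Hₙ with m < dim H, and let ρ = (1/(dim H − m))(I − Σᵢ|φᵢ⟩⟨φᵢ|). Then the range of ρ (equivalently, the orthogonal complement of span{φ₁, …, φₘ}) contains no nonzero product vector. In particular, ρ is not a separable state (it cannot be written as a convex combination of product states). -/
open scoped ComplexInnerProductSpace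

variable {n : ℕ} {d : Fin n → ℕ}

lemma inner_eq_dot' {ι : Type*} [Fintype ι] (u v : EuclideanSpace ℂ ι) :
    ⟪u, v⟫ = dotProduct (star u) v := by
  simp [PiLp.inner_apply, dotProduct, RCLike.inner_apply, mul_comm]

lemma dot_vecMulVec' {ι : Type*} [Fintype ι] (u v x : ι → ℂ) :
    dotProduct (star u) ((Matrix.vecMulVec v (star v)).mulVec x)
      = dotProduct (star u) v * dotProduct (star v) x := by
  simp [dotProduct, Matrix.mulVec, Matrix.vecMulVec, Finset.mul_sum, Finset.sum_mul]
  rw [Finset.sum_comm]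
  congr 1; ext i; congr 1; ext j; ring

lemma dot_sum' {ι κ : Type*} [Fintype ι] (s : Finset κ) (u : ι → ℂ) (v : κ → ι → ℂ) :
    dotProduct u (∑ j ∈ s, v j) = ∑ j ∈ s, dotProduct u (v j) := by
  simp only [dotProduct, Finset.sum_apply, Finset.mul_sum]
  exact Finset.sum_comm

lemma sum_mulVec' {ι κ : Type*} [Fintype ι] [DecidableEq κ] (s : Finset κ)
    (M : κ → Matrix ι ι ℂ) (x : ι → ℂ) :
    (∑ j ∈ s, M j).mulVec x = ∑ j ∈ s, (M j).mulVec x := by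
  induction s using Finset.induction with
  | empty => simp [Matrix.zero_mulVec]
  | insert _ _ h ih => simp [Finset.sum_insert h, Matrix.add_mulVec, ih]

/-- If `{φᵢ}` is a UPB, then the range of `ρ = (I − Σᵢ|φᵢ⟩⟨φᵢ|)/(D−m)` contains no
nonzero product vector; in particular `ρ` is not separable. -/
theorem stmt_14 (n m : ℕ) (d : Fin n → ℕ)
    (a : Fin m → ∀ j : Fin n, Fin (d j) → ℂ)
    (hm : m < Fintype.card (∀ j : Fin n, Fin (d j)))
    (horth : Orthonormal ℂ (fun i => fineVec d (a i)))
    (hUPB : ¬ ∃ f : ∀ j : Fin n, Fin (d j) → ℂ,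
        fineVec d f ≠ 0 ∧ ∀ i : Fin m, ⟪fineVec d (a i), fineVec d f⟫ = 0) :
    let D : ℕ := Fintype.card (∀ j : Fin n, Fin (d j))
    let Q : Matrix (∀ j : Fin n, Fin (d j)) (∀ j : Fin n, Fin (d j)) ℂ :=
      ∑ i : Fin m, Matrix.vecMulVec (fineVec d (a i)) (star (fineVec d (a i)))
    let ρ : Matrix (∀ j : Fin n, Fin (d j)) (∀ j : Fin n, Fin (d j)) ℂ :=
      ((D : ℂ) - (m : ℂ))⁻¹ • (1 - Q)
    (∀ f : ∀ j : Fin n, Fin (d j) → ℂ,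
        (∃ x : (∀ j : Fin n, Fin (d j)) → ℂ, ρ.mulVec x = fineVec d f) →
        fineVec d f = 0) ∧
    ¬ ∃ (k : ℕ) (p : Fin k → ℝ) (g : Fin k → ∀ j : Fin n, Fin (d j) → ℂ),
        (∀ t, 0 ≤ p t) ∧ (∑ t, p t = 1) ∧ (∀ t, ‖fineVec d (g t)‖ = 1) ∧
        ρ = ∑ t : Fin k,
          (p t : ℂ) • Matrix.vecMulVec (fineVec d (g t)) (star (fineVec d (g t))) := by
  intro D Q ρ
  set φ : Fin m → EuclideanSpace ℂ (∀ j, Fin (d j)) := fun i => fineVec d (a i) with hφ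
  have hdot : ∀ i j, dotProduct (star (φ i)) (φ j) = if i = j then 1 else 0 := by
    intro i j
    rw [← inner_eq_dot']
    exact orthonormal_iff_ite.mp horth i j
  -- key: dotting φ i against ρ.mulVec x gives 0
  have hρd : ∀ (i : Fin m) (x : (∀ j, Fin (d j)) → ℂ),
      dotProduct (star (φ i)) (ρ.mulVec x) = 0 := by
    intro i x
    have hQ : dotProduct (star (φ i)) (Q.mulVec x)
        = dotProduct (star (φ i)) x := by
      show dotProduct (star (φ i))
        ((∑ j : Fin m, Matrix.vecMulVec (φ j) (star (φ j))).mulVec x) = _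
      simp only [sum_mulVec', dot_sum']
      simp only [dot_vecMulVec', hdot]
      simp
    show dotProduct (star (φ i))
      ((((D : ℂ) - (m : ℂ))⁻¹ • (1 - Q)).mulVec x) = 0
    rw [Matrix.smul_mulVec, Matrix.sub_mulVec, Matrix.one_mulVec,
      dotProduct_smul, dotProduct_sub, hQ]
    simp
  constructor
  · rintro f ⟨x, hx⟩
    by_contra hf0
    exact hUPB ⟨f, hf0, fun i => by rw [inner_eq_dot', ← hx]; exact hρd i x⟩
  · rintro ⟨k, p, g, hp0, hp1, hg1, hρeq⟩
    obtain ⟨t0, ht0⟩ : ∃ t, 0 < p t := by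
      by_contra h
      push_neg at h
      have : ∀ t, p t = 0 := fun t => le_antisymm (h t) (hp0 t)
      simp [this] at hp1
    apply hUPB
    refine ⟨g t0, ?_, ?_⟩
    · intro h0
      have := hg1 t0
      rw [show fineVec d (g t0) = 0 from h0] at this
      simp at this
    · intro i
      have key : ∀ t, dotProduct (star (φ i)) (fineVec d (g t))
            * dotProduct (star (fineVec d (g t))) (φ i)
          = (Complex.normSq (dotProduct (star (φ i)) (fineVec d (g t))) : ℂ) := by
        intro t
        rw [← Complex.mul_conj]
        congr 1
        simp [dotProduct, map_sum]
        congr 1; ext j; ring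
      have hsum : ∑ t : Fin k, ((p t : ℂ) *
          (Complex.normSq (dotProduct (star (φ i)) (fineVec d (g t))) : ℂ)) = 0 := by
        have := hρd i (φ i)
        rw [show ρ.mulVec (φ i) = _ from congrArg (fun M => Matrix.mulVec M (φ i)) hρeq] at this
        simp only [sum_mulVec', dot_sum'] at this
        simp only [Matrix.smul_mulVec, dotProduct_smul, smul_eq_mul] at this
        calc ∑ t : Fin k, ((p t : ℂ) *
              (Complex.normSq (dotProduct (star (φ i)) (fineVec d (g t))) : ℂ))
            = ∑ t : Fin k, (p t : ℂ) * (dotProduct (star (φ i))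
              ((Matrix.vecMulVec (fineVec d (g t)) (star (fineVec d (g t)))).mulVec (φ i))) := by
              refine Finset.sum_congr rfl fun t _ => ?_
              rw [dot_vecMulVec', key t]
          _ = 0 := this
      have hsumR : ∑ t : Fin k, p t *
          Complex.normSq (dotProduct (star (φ i)) (fineVec d (g t))) = 0 := by
        have := hsum
        push_cast at this
        exact_mod_cast this
      have hterm : p t0 * Complex.normSq
          (dotProduct (star (φ i)) (fineVec d (g t0))) = 0 := by
        have hnn : ∀ t ∈ Finset.univ, (0:ℝ) ≤ p t *
            Complex.normSq (dotProduct (star (φ i)) (fineVec d (g t))) :=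
          fun t _ => mul_nonneg (hp0 t) (Complex.normSq_nonneg _)
        exact (Finset.sum_eq_zero_iff_of_nonneg hnn).mp hsumR t0 (Finset.mem_univ t0)
      rw [inner_eq_dot']
      have : Complex.normSq (dotProduct (star (φ i)) (fineVec d (g t0))) = 0 := by
        rcases mul_eq_zero.mp hterm with h | h
        · exact absurd h ht0.ne'
        · exact h
      exact Complex.normSq_eq_zero.mp this
end
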